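/- On a path under strict preferences, if object o_l is reachable for agent k with l ≤ k, then there is a sequence of rational swaps ending in an assignment σ_t with σ_t(k) = o_l in which no agent i with i < l ever participates in a swap (equivalently, σ_t(i) = σ_0(i) for all i < l). -/

import Mathlib

/-- An assignment maps agents to objects bijectively (agents and objects are both `Fin n`;
object `o_i` is identified with index `i`, agent `i` initially holds `o_i`). -/
abbrev Assignment (n : ℕ) := Equiv.Perm (Fin n)

/-- `u j o` is agent `j`'s utility for object `o`; strict linear preferences mean each `u j`
is injective, and `o ≻_j o'` iff `u j o > u j o'`. -/
def StrictPref {n : ℕ} (u : Fin n → Fin n → ℕ) : Prop := ∀ j, Function.Injective (u j)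

/-- A rational swap under strict preferences: two adjacent agents exchange objects, each
strictly preferring the object received. -/
def SwapStep {n : ℕ} (adj : Fin n → Fin n → Prop) (u : Fin n → Fin n → ℕ)
    (σ σ' : Assignment n) : Prop :=
  ∃ a b : Fin n, adj a b ∧ u a (σ b) > u a (σ a) ∧ u b (σ a) > u b (σ b) ∧
    σ' = σ * Equiv.swap a b

/-- `σseq 0, σseq 1, …, σseq t` is a sequence of swaps. -/
def SwapSeq {n : ℕ} (adj : Fin n → Fin n → Prop) (u : Fin n → Fin n → ℕ)
    (σseq : ℕ → Assignment n) (t : ℕ) : Prop :=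
  ∀ m < t, SwapStep adj u (σseq m) (σseq (m + 1))

/-- Adjacency of the path `0 – 1 – ⋯ – (n-1)`. -/
def pathAdj {n : ℕ} (i j : Fin n) : Prop := i.val + 1 = j.val ∨ j.val + 1 = i.val

/-- Object `o` is reachable for agent `k` from the identity endowment. -/
def ReachableObj {n : ℕ} (adj : Fin n → Fin n → Prop) (u : Fin n → Fin n → ℕ)
    (k o : Fin n) : Prop :=
  ∃ t σseq, σseq 0 = 1 ∧ SwapSeq adj u σseq t ∧ σseq t k = o

theorem Equiv.Perm.apply_inv_self {α : Type*} (f : Equiv.Perm α) (x : α) : f (f⁻¹ x) = x :=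
  Equiv.apply_symm_apply f x

theorem Equiv.Perm.inv_apply_self {α : Type*} (f : Equiv.Perm α) (x : α) : f⁻¹ (f x) = x :=
  Equiv.symm_apply_apply f x

namespace ReachAux

def prodSeq {n : ℕ} (step : ℕ → Equiv.Perm (Fin n)) : ℕ → Equiv.Perm (Fin n)
  | 0 => 1
  | j+1 => prodSeq step j * step j

variable {n : ℕ} {u : Fin n → Fin n → ℕ} {σ : ℕ → Assignment n} {T : ℕ} {A B : ℕ → Fin n}

/-- Oriented swap-step data for the original sequence. -/
def Hstep (u : Fin n → Fin n → ℕ) (σ : ℕ → Assignment n) (T : ℕ) (A B : ℕ → Fin n) : Prop :=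
  ∀ m, m < T → (A m).val + 1 = (B m).val ∧
    u (A m) (σ m (B m)) > u (A m) (σ m (A m)) ∧
    u (B m) (σ m (A m)) > u (B m) (σ m (B m)) ∧
    σ (m+1) = σ m * Equiv.swap (A m) (B m)

lemma AB_ne (hs : Hstep u σ T A B) {m : ℕ} (hm : m < T) : A m ≠ B m := by
  intro h
  have := (hs m hm).1
  rw [h] at this
  omega

lemma applyStep (hs : Hstep u σ T A B) {m : ℕ} (hm : m < T) (c : Fin n) :
    σ (m+1) c = σ m (Equiv.swap (A m) (B m) c) := by
  rw [(hs m hm).2.2.2]; rfl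

lemma utilMono (hs : Hstep u σ T A B) (c : Fin n) :
    ∀ m m', m ≤ m' → m' ≤ T → u c (σ m c) ≤ u c (σ m' c) := by
  intro m m' hmm' hm'T
  induction m' , hmm' using Nat.le_induction with
  | base => exact le_refl _
  | succ m' hmm' ih =>
    have hm' : m' < T := by omega
    have h1 : u c (σ m c) ≤ u c (σ m' c) := ih (by omega)
    refine h1.trans ?_
    rw [applyStep hs hm' c]
    rcases eq_or_ne c (A m') with rfl | hA
    · rw [Equiv.swap_apply_left]
      exact le_of_lt (hs m' hm').2.1
    rcases eq_or_ne c (B m') with rfl | hB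
    · rw [Equiv.swap_apply_right]
      exact le_of_lt (hs m' hm').2.2.1
    · rw [Equiv.swap_apply_of_ne_of_ne hA hB]

/-- If an agent holds the same object at `τ` and `m'`, it holds it throughout. -/
lemma holdsBetween (hs : Hstep u σ T A B) (hu : StrictPref u) {c : Fin n}
    {τ m m' : ℕ} (h1 : τ ≤ m) (h2 : m ≤ m') (h3 : m' ≤ T)
    (he : σ τ c = σ m' c) : σ m c = σ τ c := by
  have u1 := utilMono hs c τ m h1 (le_trans h2 h3)
  have u2 := utilMono hs c m m' h2 h3
  rw [← he] at u2
  exact hu c (le_antisymm u2 u1)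

lemma posStep (hs : Hstep u σ T A B) {m : ℕ} (hm : m < T) (x : Fin n) :
    (σ (m+1))⁻¹ x = Equiv.swap (A m) (B m) ((σ m)⁻¹ x) := by
  rw [(hs m hm).2.2.2, mul_inv_rev, Equiv.Perm.mul_apply, Equiv.swap_inv]

lemma posNonPart (hs : Hstep u σ T A B) {m : ℕ} (hm : m < T) {x : Fin n}
    (h1 : (σ m)⁻¹ x ≠ A m) (h2 : (σ m)⁻¹ x ≠ B m) :
    (σ (m+1))⁻¹ x = (σ m)⁻¹ x := by
  rw [posStep hs hm, Equiv.swap_apply_of_ne_of_ne h1 h2]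

lemma posConst (hs : Hstep u σ T A B) {x : Fin n} {m m' : ℕ}
    (hmm' : m ≤ m') (hm'T : m' ≤ T)
    (hnp : ∀ s, m ≤ s → s < m' → (σ s)⁻¹ x ≠ A s ∧ (σ s)⁻¹ x ≠ B s) :
    (σ m')⁻¹ x = (σ m)⁻¹ x := by
  induction m', hmm' using Nat.le_induction with
  | base => rfl
  | succ m' hmm' ih =>
    have h1 : (σ m')⁻¹ x = (σ m)⁻¹ x :=
      ih (by omega) (fun s h1 h2 => hnp s h1 (by omega))
    have hnp' := hnp m' hmm' (by omega)
    rw [posNonPart hs (by omega) hnp'.1 hnp'.2, h1]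

/-- no right-then-left move for a single object -/
lemma noflip_rl (hs : Hstep u σ T A B) (hu : StrictPref u) :
    ∀ d, ∀ (x : Fin n) (m m' : ℕ), m' - m ≤ d → m < m' → m' < T →
    (σ m)⁻¹ x = A m → (σ m')⁻¹ x = B m' → False := by
  intro d
  induction d using Nat.strong_induction_on with
  | _ d ih =>
    intro x m m' hd hmm' hm'T hR hL
    by_cases hex : ∃ s, m < s ∧ s < m' ∧ ((σ s)⁻¹ x = A s ∨ (σ s)⁻¹ x = B s)
    · obtain ⟨s, hs1, hs2, hAB⟩ := hex
      rcases hAB with hA | hB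
      · exact ih (m' - s) (by omega) x s m' (le_refl _) hs2 hm'T hA hL
      · exact ih (s - m) (by omega) x m s (le_refl _) hs1 (by omega) hR hB
    · push_neg at hex
      have hmT : m < T := by omega
      have hconst : (σ m')⁻¹ x = (σ (m+1))⁻¹ x := by
        apply posConst hs (by omega) (by omega)
        intro s h1 h2
        have := hex s (by omega) (by omega)
        exact this
      have hB1 : (σ (m+1))⁻¹ x = B m := by
        rw [posStep hs hmT, hR, Equiv.swap_apply_left]
      have hBB : B m' = B m := by rw [← hL, hconst, hB1]
      have hAA : A m' = A m := by
        have e1 := (hs m hmT).1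
        have e2 := (hs m' hm'T).1
        have : (A m').val = (A m).val := by rw [hBB] at e2; omega
        exact Fin.ext this
      have hpos' : (σ (m'+1))⁻¹ x = A m := by
        rw [posStep hs hm'T, hL, Equiv.swap_apply_right, hAA]
      -- agent A m holds x at m, not at m+1, again at m'+1: contradiction
      have hold1 : σ m (A m) = x := by rw [← hR, Equiv.Perm.apply_inv_self]
      have hold3 : σ (m'+1) (A m) = x := by rw [← hpos', Equiv.Perm.apply_inv_self]
      have hold2 : σ (m+1) (A m) = x := by
        have := holdsBetween hs hu (τ := m) (m := m+1) (m' := m'+1)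
          (by omega) (by omega) (by omega) (hold1.trans hold3.symm)
        rw [this, hold1]
      have : (σ (m+1))⁻¹ x = A m := by rw [← hold2, Equiv.Perm.inv_apply_self]
      rw [hB1] at this
      exact AB_ne hs hmT this.symm

/-- no left-then-right move for a single object -/
lemma noflip_lr (hs : Hstep u σ T A B) (hu : StrictPref u) :
    ∀ d, ∀ (x : Fin n) (m m' : ℕ), m' - m ≤ d → m < m' → m' < T →
    (σ m)⁻¹ x = B m → (σ m')⁻¹ x = A m' → False := by
  intro d
  induction d using Nat.strong_induction_on with
  | _ d ih =>
    intro x m m' hd hmm' hm'T hL hR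
    by_cases hex : ∃ s, m < s ∧ s < m' ∧ ((σ s)⁻¹ x = A s ∨ (σ s)⁻¹ x = B s)
    · obtain ⟨s, hs1, hs2, hAB⟩ := hex
      rcases hAB with hA | hB
      · exact ih (s - m) (by omega) x m s (le_refl _) hs1 (by omega) hL hA
      · exact ih (m' - s) (by omega) x s m' (le_refl _) hs2 hm'T hB hR
    · push_neg at hex
      have hmT : m < T := by omega
      have hconst : (σ m')⁻¹ x = (σ (m+1))⁻¹ x := by
        apply posConst hs (by omega) (by omega)
        intro s h1 h2
        have := hex s (by omega) (by omega)
        exact this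
      have hA1 : (σ (m+1))⁻¹ x = A m := by
        rw [posStep hs hmT, hL, Equiv.swap_apply_right]
      have hAA : A m' = A m := by rw [← hR, hconst, hA1]
      have hBB : B m' = B m := by
        have e1 := (hs m hmT).1
        have e2 := (hs m' hm'T).1
        have : (B m').val = (B m).val := by rw [hAA] at e2; omega
        exact Fin.ext this
      have hpos' : (σ (m'+1))⁻¹ x = B m := by
        rw [posStep hs hm'T, hR, Equiv.swap_apply_left, hBB]
      have hold1 : σ m (B m) = x := by rw [← hL, Equiv.Perm.apply_inv_self]
      have hold3 : σ (m'+1) (B m) = x := by rw [← hpos', Equiv.Perm.apply_inv_self]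
      have hold2 : σ (m+1) (B m) = x := by
        have := holdsBetween hs hu (τ := m) (m := m+1) (m' := m'+1)
          (by omega) (by omega) (by omega) (hold1.trans hold3.symm)
        rw [this, hold1]
      have : (σ (m+1))⁻¹ x = B m := by rw [← hold2, Equiv.Perm.inv_apply_self]
      rw [hA1] at this
      exact AB_ne hs hmT this

/-- An object that moves right at some time never moves left. -/
lemma rightNL (hs : Hstep u σ T A B) (hu : StrictPref u) {x : Fin n} {m : ℕ}
    (hm : m < T) (hR : (σ m)⁻¹ x = A m) :
    ∀ s, s < T → (σ s)⁻¹ x ≠ B s := by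
  intro s hsT hB
  rcases lt_trichotomy s m with h | rfl | h
  · exact noflip_lr hs hu (m - s) x s m (le_refl _) h hm hB hR
  · exact AB_ne hs hm (hR.symm.trans hB)
  · exact noflip_rl hs hu (s - m) x m s (le_refl _) h hsT hR hB

/-- An object that moves left at some time never moves right. -/
lemma leftNR (hs : Hstep u σ T A B) (hu : StrictPref u) {x : Fin n} {m : ℕ}
    (hm : m < T) (hL : (σ m)⁻¹ x = B m) :
    ∀ s, s < T → (σ s)⁻¹ x ≠ A s := by
  intro s hsT hA
  rcases lt_trichotomy s m with h | rfl | h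
  · exact noflip_rl hs hu (m - s) x s m (le_refl _) h hm hA hL
  · exact AB_ne hs hm (hA.symm.trans hL)
  · exact noflip_lr hs hu (s - m) x m s (le_refl _) h hsT hL hA

/-- Position is nondecreasing for never-left-moving objects. -/
lemma posMonoNL (hs : Hstep u σ T A B) {x : Fin n}
    (hNL : ∀ s, s < T → (σ s)⁻¹ x ≠ B s) {m m' : ℕ} (hmm' : m ≤ m') (hm'T : m' ≤ T) :
    ((σ m)⁻¹ x).val ≤ ((σ m')⁻¹ x).val := by
  induction m', hmm' using Nat.le_induction with
  | base => exact le_refl _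
  | succ m' hmm' ih =>
    have hm' : m' < T := by omega
    refine (ih (by omega)).trans ?_
    rw [posStep hs hm']
    rcases eq_or_ne ((σ m')⁻¹ x) (A m') with hA | hA
    · rw [hA, Equiv.swap_apply_left, ← hA]
      have := (hs m' hm').1
      rw [hA]; omega
    · rw [Equiv.swap_apply_of_ne_of_ne hA (hNL m' hm')]

/-- Position is nonincreasing for never-right-moving objects. -/
lemma posAntiNR (hs : Hstep u σ T A B) {x : Fin n}
    (hNR : ∀ s, s < T → (σ s)⁻¹ x ≠ A s) {m m' : ℕ} (hmm' : m ≤ m') (hm'T : m' ≤ T) :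
    ((σ m')⁻¹ x).val ≤ ((σ m)⁻¹ x).val := by
  induction m', hmm' using Nat.le_induction with
  | base => exact le_refl _
  | succ m' hmm' ih =>
    have hm' : m' < T := by omega
    refine le_trans ?_ (ih (by omega))
    rw [posStep hs hm']
    rcases eq_or_ne ((σ m')⁻¹ x) (B m') with hB | hB
    · rw [hB, Equiv.swap_apply_right, ← hB]
      have := (hs m' hm').1
      rw [hB]; omega
    · rw [Equiv.swap_apply_of_ne_of_ne (hNR m' hm') hB]

/-- Two never-left-moving objects preserve their relative order. -/
lemma orderPres (hs : Hstep u σ T A B) {x y : Fin n} (hxy : x ≠ y)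
    (hNLx : ∀ s, s < T → (σ s)⁻¹ x ≠ B s) (hNLy : ∀ s, s < T → (σ s)⁻¹ y ≠ B s)
    {m m' : ℕ} (hmm' : m ≤ m') (hm'T : m' ≤ T)
    (hlt : ((σ m)⁻¹ x).val < ((σ m)⁻¹ y).val) :
    ((σ m')⁻¹ x).val < ((σ m')⁻¹ y).val := by
  induction m', hmm' using Nat.le_induction with
  | base => exact hlt
  | succ m' hmm' ih =>
    have hm' : m' < T := by omega
    have hprev : ((σ m')⁻¹ x).val < ((σ m')⁻¹ y).val := ih (by omega)
    have hne : (σ (m'+1))⁻¹ x ≠ (σ (m'+1))⁻¹ y := fun h => hxy (by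
      have := congrArg (σ (m'+1)) h
      rwa [Equiv.Perm.apply_inv_self, Equiv.Perm.apply_inv_self] at this)
    have hx1 : ((σ (m'+1))⁻¹ x).val ≤ ((σ m')⁻¹ x).val + 1 := by
      rw [posStep hs hm']
      rcases eq_or_ne ((σ m')⁻¹ x) (A m') with hA | hA
      · rw [hA, Equiv.swap_apply_left, ← hA]
        have := (hs m' hm').1
        rw [hA]; omega
      · rw [Equiv.swap_apply_of_ne_of_ne hA (hNLx m' hm')]; omega
    have hy1 : ((σ m')⁻¹ y).val ≤ ((σ (m'+1))⁻¹ y).val :=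
      posMonoNL hs hNLy (le_refl m' |>.trans (by omega)) (by omega)
    have : ((σ (m'+1))⁻¹ x).val ≤ ((σ (m'+1))⁻¹ y).val := by omega
    rcases this.lt_or_eq with h | h
    · exact h
    · exact absurd (Fin.ext h) hne

end ReachAux

/-- 0-indexed: on a path under strict preferences, if object `o_l` is reachable
for agent `k` with `l ≤ k`, then there is a sequence of rational swaps ending with agent `k`
holding `o_l` in which no agent `i < l` ever participates in a swap (its held object stays
its initial endowment at every step). -/
theorem reachable_without_left_agents {n : ℕ}
    (u : Fin n → Fin n → ℕ) (hu : StrictPref u)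
    (l k : Fin n) (hlk : l.val ≤ k.val)
    (h : ReachableObj pathAdj u k l) :
    ∃ t σseq, σseq 0 = 1 ∧ SwapSeq pathAdj u σseq t ∧ σseq t k = l ∧
      ∀ m ≤ t, ∀ i : Fin n, i.val < l.val → σseq m i = i := by

  classical
  obtain ⟨T, σ, hσ0, hseq, hσT⟩ := h
  have hne : Nonempty (Fin n) := ⟨l⟩
  -- orient the swaps
  have hor : ∀ m, m < T → ∃ a b : Fin n, a.val + 1 = b.val ∧
      u a (σ m b) > u a (σ m a) ∧ u b (σ m a) > u b (σ m b) ∧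
      σ (m+1) = σ m * Equiv.swap a b := by
    intro m hm
    obtain ⟨a, b, hadj, h1, h2, h3⟩ := hseq m hm
    rcases hadj with hab | hba
    · exact ⟨a, b, hab, h1, h2, h3⟩
    · exact ⟨b, a, hba, h2, h1, by rw [Equiv.swap_comm]; exact h3⟩
  choose! A B hAB using hor
  have hs : ReachAux.Hstep u σ T A B := hAB
  open ReachAux in
  have hpos0 : ∀ x : Fin n, (σ 0)⁻¹ x = x := by intro x; rw [hσ0]; rfl
  have hposT : (σ T)⁻¹ l = k := by rw [← hσT, Equiv.Perm.inv_apply_self]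
  -- object l never moves left
  have hNLl : ∀ s, s < T → (σ s)⁻¹ l ≠ B s := by
    intro s hsT hB
    have hNR := ReachAux.leftNR hs hu hsT hB
    have h1 : ((σ T)⁻¹ l).val ≤ ((σ (s+1))⁻¹ l).val :=
      ReachAux.posAntiNR hs hNR (by omega) (le_refl T)
    have h2 : ((σ s)⁻¹ l).val ≤ ((σ 0)⁻¹ l).val :=
      ReachAux.posAntiNR hs hNR (by omega) (by omega)
    have h3 : (σ (s+1))⁻¹ l = A s := by
      rw [ReachAux.posStep hs hsT, hB, Equiv.swap_apply_right]
    have e1 := (hs s hsT).1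
    rw [hposT] at h1
    rw [hpos0] at h2
    rw [h3] at h1
    rw [hB] at h2
    omega
  have hlmono : ∀ m m', m ≤ m' → m' ≤ T → ((σ m)⁻¹ l).val ≤ ((σ m')⁻¹ l).val :=
    fun m m' h1 h2 => ReachAux.posMonoNL hs hNLl h1 h2
  have hllb : ∀ m, m ≤ T → l.val ≤ ((σ m)⁻¹ l).val := by
    intro m hm
    have := hlmono 0 m (by omega) hm
    rwa [hpos0] at this
  -- the swaps we keep
  set Keep : ℕ → Prop := fun m => m < T ∧ ((σ m)⁻¹ l).val ≤ (A m).val with hKeepdef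
  have keep_l : ∀ m, m < T → ((σ m)⁻¹ l = A m ∨ (σ m)⁻¹ l = B m) → Keep m := by
    intro m hm hp
    rcases hp with hA | hB
    · exact ⟨hm, le_of_eq (congrArg Fin.val hA)⟩
    · exact absurd hB (hNLl m hm)
  have closure : ∀ m, Keep m → ∀ s, s < m → ∀ x : Fin n,
      ((σ m)⁻¹ x = A m ∨ (σ m)⁻¹ x = B m) →
      ((σ s)⁻¹ x = A s ∨ (σ s)⁻¹ x = B s) → Keep s := by
    rintro m ⟨hmT, hkeep⟩ s hsm x hpm hps
    have hsT : s < T := by omega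
    refine ⟨hsT, ?_⟩
    rcases hpm with hA | hB
    · rcases eq_or_ne x l with rfl | hxl
      · rcases hps with hA' | hB'
        · exact le_of_eq (congrArg Fin.val hA')
        · exact absurd hB' (hNLl s hsT)
      · have hNLx := ReachAux.rightNL hs hu hmT hA
        have hpsA : (σ s)⁻¹ x = A s := by
          rcases hps with h' | h'
          · exact h'
          · exact absurd h' (hNLx s hsT)
        have hne_pos : ((σ m)⁻¹ l).val ≠ ((σ m)⁻¹ x).val := by
          intro h'
          have h2 := congrArg (σ m) (Fin.ext h' : (σ m)⁻¹ l = (σ m)⁻¹ x)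
          rw [Equiv.Perm.apply_inv_self, Equiv.Perm.apply_inv_self] at h2
          exact hxl h2.symm
        have hxm : ((σ m)⁻¹ x).val = (A m).val := congrArg Fin.val hA
        have hlt_m : ((σ m)⁻¹ l).val < ((σ m)⁻¹ x).val := by omega
        have hlt_s : ((σ s)⁻¹ l).val < ((σ s)⁻¹ x).val := by
          by_contra hge
          push_neg at hge
          have hne_s : ((σ s)⁻¹ x).val ≠ ((σ s)⁻¹ l).val := by
            intro h'
            have h2 := congrArg (σ s) (Fin.ext h' : (σ s)⁻¹ x = (σ s)⁻¹ l)
            rw [Equiv.Perm.apply_inv_self, Equiv.Perm.apply_inv_self] at h2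
            exact hxl h2
          have hlt : ((σ s)⁻¹ x).val < ((σ s)⁻¹ l).val := by omega
          have := ReachAux.orderPres hs hxl hNLx hNLl (le_of_lt hsm) (le_of_lt hmT) hlt
          omega
        rw [hpsA] at hlt_s
        omega
    · have hNRx := ReachAux.leftNR hs hu hmT hB
      have hpsB : (σ s)⁻¹ x = B s := by
        rcases hps with h' | h'
        · exact absurd h' (hNRx s hsT)
        · exact h'
      have hanti : ((σ m)⁻¹ x).val ≤ ((σ s)⁻¹ x).val :=
        ReachAux.posAntiNR hs hNRx (le_of_lt hsm) (le_of_lt hmT)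
      have e1 := (hs m hmT).1
      have e2 := (hs s hsT).1
      have hlm := hlmono s m (le_of_lt hsm) (le_of_lt hmT)
      rw [hB, hpsB] at hanti
      omega
  have keep_ge : ∀ m, Keep m → l.val ≤ (A m).val := by
    rintro m ⟨hmT, hkeep⟩
    have := hllb m (le_of_lt hmT)
    omega
  -- enumerate kept swaps
  set K : Finset ℕ := (Finset.range T).filter Keep with hKdef
  set N : ℕ := K.card with hNdef
  have memK : ∀ s, s ∈ K ↔ Keep s := by
    intro s
    rw [hKdef, Finset.mem_filter, Finset.mem_range]
    exact ⟨fun h' => h'.2, fun h' => ⟨h'.1, h'⟩⟩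
  set E : Fin N ↪o ℕ := K.orderEmbOfFin rfl with hEdef
  set e : ℕ → ℕ := fun j => if h' : j < N then E ⟨j, h'⟩ else 0 with hedef
  have hekeep : ∀ j, j < N → Keep (e j) := by
    intro j hj
    have : E ⟨j, hj⟩ ∈ K := K.orderEmbOfFin_mem rfl ⟨j, hj⟩
    rw [memK] at this
    simpa [hedef, dif_pos hj] using this
  have hesurj : ∀ s, Keep s → ∃ j, j < N ∧ e j = s := by
    intro s hks
    have : s ∈ Set.range E := by
      rw [hEdef, Finset.range_orderEmbOfFin]
      exact_mod_cast (memK s).mpr hks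
    obtain ⟨⟨j, hj⟩, hjs⟩ := this
    exact ⟨j, hj, by simpa [hedef, dif_pos hj] using hjs⟩
  have hemono : ∀ i j, i ≤ j → j < N → e i ≤ e j := by
    intro i j hij hj
    have hi : i < N := by omega
    simp only [hedef, dif_pos hi, dif_pos hj]
    exact E.monotone (Fin.mk_le_mk.mpr hij)
  have hemonos : ∀ i j, i < j → j < N → e i < e j := by
    intro i j hij hj
    have hi : i < N := by omega
    simp only [hedef, dif_pos hi, dif_pos hj]
    exact E.strictMono (Fin.mk_lt_mk.mpr hij)
  -- the new sequence
  set step : ℕ → Equiv.Perm (Fin n) :=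
    fun j => if h' : j < N then Equiv.swap (A (e j)) (B (e j)) else 1 with hstepdef
  set σ' : ℕ → Assignment n := ReachAux.prodSeq step with hσ'def
  have hσ'succ : ∀ j, σ' (j+1) = σ' j * step j := fun j => rfl
  set tj : ℕ → ℕ := fun j => if j < N then e j else T with htjdef
  have htjle : ∀ j, tj j ≤ T := by
    intro j
    by_cases h' : j < N
    · have h'' : tj j = e j := by rw [htjdef]; simp [h']
      rw [h'']; exact le_of_lt (hekeep j h').1
    · have h'' : tj j = T := by rw [htjdef]; simp [h']
      rw [h'']
  -- the key invariant
  have hINV : ∀ j, j ≤ N → ∀ x : Fin n,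
      (∀ s, s < tj j → ((σ s)⁻¹ x = A s ∨ (σ s)⁻¹ x = B s) → Keep s) →
      (σ' j)⁻¹ x = (σ (tj j))⁻¹ x := by
    intro j
    induction j with
    | zero =>
      intro _ x hfk
      have h0 : (σ' 0)⁻¹ x = x := by rw [hσ'def]; rfl
      rw [h0]
      have : (σ (tj 0))⁻¹ x = (σ 0)⁻¹ x := by
        apply ReachAux.posConst hs (by omega) (htjle 0)
        intro s h1 h2
        constructor
        · intro hA
          obtain ⟨i, hi, hie⟩ := hesurj s (hfk s h2 (Or.inl hA))
          have hN0 : 0 < N := by omega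
          have : tj 0 = e 0 := by rw [htjdef]; simp [hN0]
          have := hemono 0 i (by omega) hi
          omega
        · intro hB
          obtain ⟨i, hi, hie⟩ := hesurj s (hfk s h2 (Or.inr hB))
          have hN0 : 0 < N := by omega
          have : tj 0 = e 0 := by rw [htjdef]; simp [hN0]
          have := hemono 0 i (by omega) hi
          omega
      rw [this, hpos0]
    | succ j ih =>
      intro hjN x hfk
      have hj : j < N := by omega
      have htjj : tj j = e j := by rw [htjdef]; simp [hj]
      have hKm : Keep (e j) := hekeep j hj
      have hmT : e j < T := hKm.1
      have hmlt : e j < tj (j+1) := by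
        by_cases h' : j + 1 < N
        · have h'' : tj (j+1) = e (j+1) := by rw [htjdef]; simp [h']
          rw [h'']; exact hemonos j (j+1) (by omega) h'
        · have h'' : tj (j+1) = T := by rw [htjdef]; simp [h']
          rw [h'']; exact hmT
      have hfkm : ∀ s, s < tj j → ((σ s)⁻¹ x = A s ∨ (σ s)⁻¹ x = B s) → Keep s := by
        intro s h1 h2
        exact hfk s (by omega) h2
      have hIH : (σ' j)⁻¹ x = (σ (e j))⁻¹ x := by
        have := ih (by omega) x hfkm
        rwa [htjj] at this
      have hstepj : step j = Equiv.swap (A (e j)) (B (e j)) := by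
        rw [hstepdef]; simp [hj]
      have hnext : (σ' (j+1))⁻¹ x = (σ (e j + 1))⁻¹ x := by
        rw [hσ'succ j, hstepj, mul_inv_rev, Equiv.Perm.mul_apply, Equiv.swap_inv, hIH,
          ← ReachAux.posStep hs hmT]
      rw [hnext]
      refine (ReachAux.posConst hs (by omega) (htjle (j+1)) ?_).symm
      intro s h1 h2
      have hsT : s < T := by have := htjle (j+1); omega
      constructor
      · intro hA
        obtain ⟨i, hi, hie⟩ := hesurj s (hfk s h2 (Or.inl hA))
        rcases le_or_gt i j with hij | hij
        · have := hemono i j hij hj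
          omega
        · by_cases hj1 : j + 1 < N
          · have h3 : tj (j+1) = e (j+1) := by rw [htjdef]; simp [hj1]
            rw [h3] at h2
            have := hemono (j+1) i hij hi
            omega
          · omega
      · intro hB
        obtain ⟨i, hi, hie⟩ := hesurj s (hfk s h2 (Or.inr hB))
        rcases le_or_gt i j with hij | hij
        · have := hemono i j hij hj
          omega
        · by_cases hj1 : j + 1 < N
          · have h3 : tj (j+1) = e (j+1) := by rw [htjdef]; simp [hj1]
            rw [h3] at h2
            have := hemono (j+1) i hij hi
            omega
          · omega
  -- assemble
  refine ⟨N, σ', by rw [hσ'def]; rfl, ?_, ?_, ?_⟩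
  · -- SwapSeq
    intro j hjN
    have hKm : Keep (e j) := hekeep j hjN
    have hmT : e j < T := hKm.1
    have htjj : tj j = e j := by rw [htjdef]; simp [hjN]
    have hpa : (σ (e j))⁻¹ (σ (e j) (A (e j))) = A (e j) := Equiv.Perm.inv_apply_self _ _
    have hpb : (σ (e j))⁻¹ (σ (e j) (B (e j))) = B (e j) := Equiv.Perm.inv_apply_self _ _
    have hfka : ∀ s, s < tj j → ((σ s)⁻¹ (σ (e j) (A (e j))) = A s ∨
        (σ s)⁻¹ (σ (e j) (A (e j))) = B s) → Keep s := by
      intro s h1 h2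
      rw [htjj] at h1
      exact closure (e j) hKm s h1 _ (Or.inl hpa) h2
    have hfkb : ∀ s, s < tj j → ((σ s)⁻¹ (σ (e j) (B (e j))) = A s ∨
        (σ s)⁻¹ (σ (e j) (B (e j))) = B s) → Keep s := by
      intro s h1 h2
      rw [htjj] at h1
      exact closure (e j) hKm s h1 _ (Or.inr hpb) h2
    have ha : σ' j (A (e j)) = σ (e j) (A (e j)) := by
      have h' := hINV j (by omega) _ hfka
      rw [htjj, hpa] at h'
      have h2 := congrArg (σ' j) h'
      rw [Equiv.Perm.apply_inv_self] at h2
      exact h2.symm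
    have hb : σ' j (B (e j)) = σ (e j) (B (e j)) := by
      have h' := hINV j (by omega) _ hfkb
      rw [htjj, hpb] at h'
      have h2 := congrArg (σ' j) h'
      rw [Equiv.Perm.apply_inv_self] at h2
      exact h2.symm
    refine ⟨A (e j), B (e j), Or.inl (hs (e j) hmT).1, ?_, ?_, ?_⟩
    · rw [ha, hb]; exact (hs (e j) hmT).2.1
    · rw [ha, hb]; exact (hs (e j) hmT).2.2.1
    · rw [hσ'succ j, hstepdef]; simp [hjN]
  · -- σ' N k = l
    have htjN : tj N = T := by rw [htjdef]; simp
    have := hINV N (le_refl N) l (by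
      intro s h1 h2
      rw [htjN] at h1
      exact keep_l s h1 h2)
    rw [htjN, hposT] at this
    rw [← this, Equiv.Perm.apply_inv_self]
  · -- left agents untouched
    have hfix : ∀ j, ∀ i : Fin n, i.val < l.val → σ' j i = i := by
      intro j
      induction j with
      | zero => intro i hi; rw [hσ'def]; rfl
      | succ j ih =>
        intro i hi
        rw [hσ'succ j]
        by_cases hj : j < N
        · have hKm : Keep (e j) := hekeep j hj
          have hge := keep_ge (e j) hKm
          have e1 := (hs (e j) hKm.1).1
          have hiA : i ≠ A (e j) := by
            intro h'; rw [h'] at hi; omega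
          have hiB : i ≠ B (e j) := by
            intro h'; rw [h'] at hi; omega
          rw [hstepdef]
          simp only [dif_pos hj, Equiv.Perm.mul_apply, Equiv.swap_apply_of_ne_of_ne hiA hiB]
          exact ih i hi
        · rw [hstepdef]
          simp only [dif_neg hj, Equiv.Perm.mul_apply, Equiv.Perm.one_apply]
          exact ih i hi
    intro m _ i hi
    exact hfix m i hi
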